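/- Let $\Delta \subseteq \mathbb{R}^n$ be a nonempty compact convex set, let $F$ be a real polynomial function on $\mathbb{R}^n$ of degree at most $p$, and let $\phi$ be the homogeneous component of $F$ of degree $p$. Then $\lim_{k \to \infty} k^{-(n+p)} \sum_{\lambda \in (k\Delta) \cap \mathbb{Z}^n} F(\lambda) = \int_\Delta \phi \, d\mu$, where $d\mu$ is the Lebesgue measure on $\mathbb{R}^n$. -/

import Mathlib

open Pointwise MeasureTheory Filter

/-- The embedding of the lattice `ℤⁿ` into `ℝⁿ`. -/
def latticeEmb (n : ℕ) : (Fin n → ℤ) → (Fin n → ℝ) := fun k i => (k i : ℝ)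

lemma continuousAt_indicator_of_not_frontier {E : Type*} [TopologicalSpace E]
    {s : Set E} {f : E → ℝ} (hf : Continuous f) {x : E} (hx : x ∉ frontier s) :
    ContinuousAt (Set.indicator s f) x := by
  rw [frontier, Set.mem_diff, not_and_or, not_not] at hx
  rcases hx with hx | hx
  · have h0 : Set.EqOn (Set.indicator s f) 0 (closure s)ᶜ := fun y hy ↦ by
      simp [Set.indicator_of_notMem (fun hys ↦ hy (subset_closure hys))]
    exact (continuousAt_const (y := (0:ℝ))).congr
      ((isClosed_closure.isOpen_compl.eventually_mem hx).mono fun y hy ↦ by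
        simpa using (h0 hy).symm)
  · have h0 : Set.EqOn (Set.indicator s f) f (interior s) := fun y hy ↦
      Set.indicator_of_mem (interior_subset hy) f
    exact hf.continuousAt.congr ((isOpen_interior.eventually_mem hx).mono
      fun y hy ↦ (h0 hy).symm)

lemma lattice_finite {n : ℕ} {t : Set (Fin n → ℝ)} (ht : Bornology.IsBounded t) :
    {m : Fin n → ℤ | latticeEmb n m ∈ t}.Finite := by
  obtain ⟨R, hR⟩ := ht.subset_closedBall 0
  refine Set.Finite.subset (Set.finite_Icc (fun _ : Fin n ↦ (⌈-R⌉ : ℤ)) fun _ ↦ ⌊R⌋) ?_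
  intro m hm
  have := hR hm
  rw [Metric.mem_closedBall, dist_zero_right] at this
  constructor <;> intro i
  · have := (abs_le.mp ((norm_le_pi_norm (latticeEmb n m) i).trans (by simpa using this))).1
    exact Int.ceil_le.mpr (by simpa [latticeEmb] using this)
  · have := (abs_le.mp ((norm_le_pi_norm (latticeEmb n m) i).trans (by simpa using this))).2
    exact Int.le_floor.mpr (by simpa [latticeEmb] using this)

lemma eval_smul_of_isHomogeneous {n d : ℕ} {φ : MvPolynomial (Fin n) ℝ}
    (hφ : φ.IsHomogeneous d) (c : ℝ) (x : Fin n → ℝ) :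
    MvPolynomial.eval (c • x) φ = c ^ d * MvPolynomial.eval x φ := by
  rw [MvPolynomial.eval_eq, MvPolynomial.eval_eq, Finset.mul_sum]
  refine Finset.sum_congr rfl fun m hm ↦ ?_
  have hd : ∑ i ∈ m.support, m i = d := by
    have := hφ (MvPolynomial.mem_support_iff.mp hm)
    simpa [Finsupp.weight_apply, Finsupp.sum, mul_comm] using this
  rw [← hd]
  simp only [Pi.smul_apply, smul_eq_mul, mul_pow]
  rw [Finset.prod_mul_distrib, Finset.prod_pow_eq_pow_sum]
  ring

open BoxIntegral BoxIntegral.unitPartition in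
lemma tag_eq_smul_latticeEmb {n : ℕ} (k : ℕ) [NeZero k] (ν : Fin n → ℤ) :
    (tag k ν : Fin n → ℝ) = (k : ℝ)⁻¹ • latticeEmb n (ν + 1) := by
  funext i
  simp only [tag_apply, latticeEmb, Pi.smul_apply, smul_eq_mul, Pi.add_apply, Pi.one_apply]
  push_cast
  rw [div_eq_inv_mul]

open BoxIntegral BoxIntegral.unitPartition in
lemma tendsto_sum_div_pow {n : ℕ} {f : (Fin n → ℝ) → ℝ} (hf : Continuous f)
    {s : Set (Fin n → ℝ)} (hb : Bornology.IsBounded s) (hm : MeasurableSet s)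
    (hfr : volume (frontier s) = 0) (T : ℕ → Finset (Fin n → ℤ))
    (hT : ∀ k m, m ∈ T k ↔ latticeEmb n m ∈ (k : ℝ) • s) :
    Tendsto (fun k : ℕ ↦ (∑ m ∈ T k, f ((k : ℝ)⁻¹ • latticeEmb n m)) / (k : ℝ) ^ n)
      atTop (nhds (∫ x in s, f x)) := by
  classical
  obtain ⟨B, hB, hs₀⟩ := BoxIntegral.le_hasIntegralVertices_of_isBounded hb
  obtain ⟨C, hC⟩ := B.isCompact_Icc.exists_bound_of_continuousOn hf.continuousOn
  have h₁ : ∃ C, ∀ x ∈ BoxIntegral.Box.Icc B, ‖Set.indicator s f x‖ ≤ C :=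
    ⟨C, fun x hx ↦ (norm_indicator_le_norm_self _ _).trans (hC x hx)⟩
  have h₂ : ∀ᵐ x, ContinuousAt (Set.indicator s f) x := by
    filter_upwards [compl_mem_ae_iff.mpr hfr] with x hx
    exact continuousAt_indicator_of_not_frontier hf hx
  have hint := MeasureTheory.AEContinuous.hasBoxIntegral (volume : Measure (Fin n → ℝ)) h₁ h₂
      IntegrationParams.Riemann
  rw [MeasureTheory.setIntegral_indicator hm, Set.inter_eq_self_of_subset_right hs₀] at hint
  rw [Metric.tendsto_atTop]
  intro ε hε
  obtain ⟨r, hr₁, hr₂⟩ := BoxIntegral.hasIntegral_iff.mp hint (ε / 2) (by positivity)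
  set ρ : Set.Ioi (0 : ℝ) := r 0 0 with hρdef
  have hρpos : 0 < (ρ : ℝ) := ρ.2
  obtain ⟨N, hN⟩ := exists_nat_gt (ρ : ℝ)⁻¹
  refine ⟨max N 1, fun k hk ↦ ?_⟩
  have hk1 : 1 ≤ k := le_trans (le_max_right N 1) hk
  haveI : NeZero k := ⟨by omega⟩
  have hkpos : (0 : ℝ) < k := by exact_mod_cast hk1
  have h1k : 1 / (k : ℝ) ≤ ρ := by
    have h2 : (ρ : ℝ)⁻¹ ≤ (k : ℝ) :=
      le_trans hN.le (by exact_mod_cast le_trans (le_max_left N 1) hk)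
    calc 1 / (k : ℝ) = (k : ℝ)⁻¹ := one_div _
      _ ≤ ((ρ : ℝ)⁻¹)⁻¹ := by
          apply inv_anti₀ (inv_pos.mpr hρpos) h2
      _ = ρ := inv_inv _
  have hrconst : ∀ x, r 0 x = ρ := fun x ↦ (hr₁ 0) rfl x
  have hsub : (prepartition k B).IsSubordinate (r 0) := by
    have h := prepartition_isSubordinate k B hρpos h1k
    have heq : (fun _ : Fin n → ℝ ↦ (⟨(ρ : ℝ), hρpos⟩ : Set.Ioi (0 : ℝ))) = r 0 :=
      funext fun x ↦ ((Subtype.ext (rfl : ((⟨(ρ : ℝ), hρpos⟩ : Set.Ioi (0:ℝ)) : ℝ) = ρ)).trans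
        (hrconst x).symm)
    exact heq ▸ h
  have hmem : IntegrationParams.Riemann.MemBaseSet B 0 (r 0) (prepartition k B) :=
    ⟨hsub, fun _ ↦ prepartition_isHenstock k B,
      fun h ↦ by simp [IntegrationParams.Riemann] at h,
      fun h ↦ by simp [IntegrationParams.Riemann] at h⟩
  have hdist := hr₂ 0 _ hmem (prepartition_isPartition k hB)
  have key : BoxIntegral.integralSum (Set.indicator s f)
      (volume : Measure (Fin n → ℝ)).toBoxAdditive.toSMul (prepartition k B)
      = (∑ m ∈ T k, f ((k : ℝ)⁻¹ • latticeEmb n m)) / (k : ℝ) ^ n := by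
    unfold BoxIntegral.integralSum
    have hboxes : (prepartition k B).boxes = Finset.image (fun ν ↦ box k ν)
        (admissibleIndex k B) := by
      ext J
      rw [Finset.mem_image]
      exact mem_prepartition_boxes_iff
    rw [hboxes, Finset.sum_image (fun ν _ ν' _ h ↦ box_injective k h)]
    have hterm : ∀ ν ∈ admissibleIndex k B,
        (volume : Measure (Fin n → ℝ)).toBoxAdditive.toSMul (box k ν)
          (Set.indicator s f ((prepartition k B).tag (box k ν)))
        = Set.indicator s f (tag k ν) / (k : ℝ) ^ n := by
      intro ν hν
      rw [prepartition_tag k hν]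
      rw [BoxAdditiveMap.toSMul_apply, Measure.toBoxAdditive_apply, measureReal_def, volume_box]
      simp only [Fintype.card_fin, smul_eq_mul]
      rw [ENNReal.toReal_div, ENNReal.toReal_one, ENNReal.toReal_pow, ENNReal.toReal_natCast]
      ring
    rw [Finset.sum_congr rfl hterm, ← Finset.sum_div]
    congr 1
    rw [Finset.sum_indicator_eq_sum_filter]
    refine Finset.sum_nbij' (fun ν ↦ ν + 1) (fun m ↦ m - 1) ?_ ?_ ?_ ?_ ?_
    · intro ν hν
      rw [Finset.mem_filter] at hν
      rw [hT, Set.mem_smul_set_iff_inv_smul_mem₀ (ne_of_gt hkpos),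
        ← tag_eq_smul_latticeEmb k ν]
      · exact hν.2
    · intro m hm
      rw [hT, Set.mem_smul_set_iff_inv_smul_mem₀ (ne_of_gt hkpos)] at hm
      have hxs : (tag k (m - 1) : Fin n → ℝ) ∈ s := by
        rw [tag_eq_smul_latticeEmb k (m - 1), sub_add_cancel]
        exact hm
      rw [Finset.mem_filter]
      refine ⟨?_, hxs⟩
      have := mem_admissibleIndex_of_mem_box k hB (hs₀ hxs)
      rwa [index_tag] at this
    · intro ν _; simp
    · intro m _; simp
    · intro ν hν
      rw [tag_eq_smul_latticeEmb k ν]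
  rw [key] at hdist
  exact lt_of_le_of_lt hdist (by linarith)

/-- Let `Δ ⊆ ℝⁿ` be a nonempty compact convex set, `F` a real polynomial on `ℝⁿ` of degree
at most `p` and `φ` its homogeneous component of degree `p`.  Then
`k^{-(n+p)} ∑_{λ ∈ kΔ ∩ ℤⁿ} F(λ) → ∫_Δ φ dμ` as `k → ∞`. -/
theorem sum_over_lattice_points_tendsto_integral (n p : ℕ) (Δ : Set (Fin n → ℝ))
    (hne : Δ.Nonempty) (hcp : IsCompact Δ) (hcv : Convex ℝ Δ)
    (F : MvPolynomial (Fin n) ℝ) (hF : F.totalDegree ≤ p) :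
    Tendsto (fun k : ℕ =>
        (∑ᶠ m ∈ {m : Fin n → ℤ | latticeEmb n m ∈ (k : ℝ) • Δ},
          MvPolynomial.eval (latticeEmb n m) F) / (k : ℝ) ^ (n + p))
      atTop
      (nhds (∫ x in Δ, MvPolynomial.eval x (MvPolynomial.homogeneousComponent p F))) := by

  classical
  have hbd : Bornology.IsBounded Δ := hcp.isBounded
  have hfin : ∀ k : ℕ, {m : Fin n → ℤ | latticeEmb n m ∈ (k : ℝ) • Δ}.Finite := fun k ↦
    lattice_finite (hbd.smul₀ (k : ℝ))
  set T : ℕ → Finset (Fin n → ℤ) := fun k ↦ (hfin k).toFinset with hTdef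
  have hT : ∀ k m, m ∈ T k ↔ latticeEmb n m ∈ (k : ℝ) • Δ := fun k m ↦
    (hfin k).mem_toFinset
  have hms : MeasurableSet Δ := hcp.isClosed.measurableSet
  have hfr : volume (frontier Δ) = 0 := hcv.addHaar_frontier volume
  set φ : ℕ → MvPolynomial (Fin n) ℝ := fun d ↦ MvPolynomial.homogeneousComponent d F with hφdef
  have hhom : ∀ d, (φ d).IsHomogeneous d := fun d ↦
    MvPolynomial.homogeneousComponent_isHomogeneous d F
  have hA : ∀ d, Tendsto (fun k : ℕ ↦
      (∑ m ∈ T k, MvPolynomial.eval ((k : ℝ)⁻¹ • latticeEmb n m) (φ d)) / (k : ℝ) ^ n)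
      atTop (nhds (∫ x in Δ, MvPolynomial.eval x (φ d))) := fun d ↦
    tendsto_sum_div_pow (MvPolynomial.continuous_eval (φ d)) hbd hms hfr T hT
  have hc : ∀ d ∈ Finset.range (p + 1), Tendsto (fun k : ℕ ↦ (k : ℝ) ^ d / (k : ℝ) ^ p)
      atTop (nhds (if d = p then 1 else 0)) := by
    intro d hd
    rcases eq_or_lt_of_le (Nat.lt_succ_iff.mp (Finset.mem_range.mp hd)) with h | h
    · simp only [h, if_pos rfl]
      apply Tendsto.congr' (f₁ := fun _ ↦ (1 : ℝ)) _ tendsto_const_nhds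
      filter_upwards [eventually_ge_atTop 1] with k hk
      have : ((k : ℝ)) ≠ 0 := by positivity
      rw [div_self (pow_ne_zero _ this)]
    · simp only [if_neg (Nat.ne_of_lt h)]
      exact (tendsto_pow_div_pow_atTop_zero h).comp tendsto_natCast_atTop_atTop
  have hlim : Tendsto (fun k : ℕ ↦ ∑ d ∈ Finset.range (p + 1),
      ((k : ℝ) ^ d / (k : ℝ) ^ p) *
        ((∑ m ∈ T k, MvPolynomial.eval ((k : ℝ)⁻¹ • latticeEmb n m) (φ d)) / (k : ℝ) ^ n))
      atTop (nhds (∫ x in Δ, MvPolynomial.eval x (φ p))) := by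
    have := tendsto_finset_sum (Finset.range (p + 1)) (fun d hd ↦ (hc d hd).mul (hA d))
    convert this using 2
    rw [show ∑ d ∈ Finset.range (p + 1), (if d = p then (1:ℝ) else 0) *
        (∫ x in Δ, MvPolynomial.eval x (φ d)) =
        ∑ d ∈ Finset.range (p + 1), (if d = p then (∫ x in Δ, MvPolynomial.eval x (φ d)) else 0)
      from Finset.sum_congr rfl fun d _ ↦ by split <;> simp]
    rw [Finset.sum_ite_eq' (Finset.range (p + 1)) p
      (fun d ↦ ∫ x in Δ, MvPolynomial.eval x (φ d))]
    simp [Nat.lt_succ_self]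
  refine Tendsto.congr' ?_ hlim
  filter_upwards [eventually_ge_atTop 1] with k hk
  have hk0 : ((k : ℝ)) ≠ 0 := by positivity
  have hdecomp : ∀ x : Fin n → ℝ, MvPolynomial.eval x F =
      ∑ d ∈ Finset.range (p + 1), MvPolynomial.eval x (φ d) := by
    intro x
    conv_lhs => rw [← MvPolynomial.sum_homogeneousComponent F]
    rw [map_sum]
    refine Finset.sum_subset (Finset.range_subset_range.mpr (by omega)) fun d _ hd ↦ ?_
    rw [MvPolynomial.homogeneousComponent_eq_zero _ _ (by
      simp only [Finset.mem_range, not_lt] at hd; omega), map_zero]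
  have hsum : (∑ᶠ (m : Fin n → ℤ) (_ : latticeEmb n m ∈ (k : ℝ) • Δ),
      MvPolynomial.eval (latticeEmb n m) F) =
      ∑ m ∈ T k, MvPolynomial.eval (latticeEmb n m) F := by
    have h := finsum_mem_coe_finset (fun m ↦ MvPolynomial.eval (latticeEmb n m) F) (T k)
    rw [(hfin k).coe_toFinset] at h
    exact h
  rw [hsum]
  have hterm : ∀ m ∈ T k, MvPolynomial.eval (latticeEmb n m) F =
      ∑ d ∈ Finset.range (p + 1), (k : ℝ) ^ d *
        MvPolynomial.eval ((k : ℝ)⁻¹ • latticeEmb n m) (φ d) := by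
    intro m _
    rw [hdecomp]
    refine Finset.sum_congr rfl fun d _ ↦ ?_
    conv_lhs => rw [show latticeEmb n m = (k : ℝ) • ((k : ℝ)⁻¹ • latticeEmb n m) from
      (smul_inv_smul₀ hk0 _).symm]
    exact eval_smul_of_isHomogeneous (hhom d) _ _
  rw [Finset.sum_congr rfl hterm, Finset.sum_comm, Finset.sum_div]
  refine Finset.sum_congr rfl fun d _ ↦ ?_
  rw [← Finset.mul_sum, pow_add, div_mul_div_comm, mul_comm ((k:ℝ) ^ p)]
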